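/- arXiv:1802.08339 — 2 statements merged into one kernel-verified Lean document; each statement's English description precedes it below -/
import Mathlib

section
/- Fix τ > 0, an integer n ≥ 1, and event times 0 < T₁ < ⋯ < T_n < τ, and let N(t) = #{i ∈ {1,…,n} : T_i ≤ t} for 0 ≤ t ≤ τ. Then the integral ∫₀¹ (N(sτ) − sN(τ))²/(s(1−s)) ds is finite and equals Σ_{i=1}^{n−1} [ (n−i)² ln((τ − T_i)/(τ − T_{i+1})) + i² ln(T_{i+1}/T_i) ] + n² [ ln(τ/(τ − T₁)) + ln(τ/T_n) − 1 ]. -/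
open Filter Set

noncomputable section

/-- The (deterministic) counting function of the event times `T 1 < T 2 < ⋯ < T n`:
`countN n T t = #{i ∈ {1,…,n} : T i ≤ t}`. -/
def countN (n : ℕ) (T : ℕ → ℝ) (t : ℝ) : ℕ :=
  Set.ncard {i : ℕ | 1 ≤ i ∧ i ≤ n ∧ T i ≤ t}

lemma countN_aux (n k : ℕ) (T : ℕ → ℝ) (x : ℝ) (hk : k ≤ n)
    (h1 : ∀ i, 1 ≤ i → i ≤ k → T i ≤ x)
    (h2 : ∀ i, k < i → i ≤ n → x < T i) :
    Set.ncard {i : ℕ | 1 ≤ i ∧ i ≤ n ∧ T i ≤ x} = k := by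
  have hset : {i : ℕ | 1 ≤ i ∧ i ≤ n ∧ T i ≤ x} = ↑(Finset.Icc 1 k) := by
    ext i
    simp only [Set.mem_setOf_eq, Finset.coe_Icc, Set.mem_Icc]
    constructor
    · rintro ⟨hi1, hin, hTi⟩
      refine ⟨hi1, ?_⟩
      by_contra h
      exact absurd hTi (not_le.2 (h2 i (lt_of_not_ge h) hin))
    · rintro ⟨hi1, hik⟩
      exact ⟨hi1, hik.trans hk, h1 i hi1 hik⟩
  rw [hset, Set.ncard_coe_finset, Nat.card_Icc]
  omega

lemma T_mono_aux (n : ℕ) (T : ℕ → ℝ) (hmono : ∀ i, 1 ≤ i → i < n → T i < T (i + 1)) :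
    ∀ i j, 1 ≤ i → i ≤ j → j ≤ n → T i ≤ T j := by
  intro i j hi hij hjn
  induction j with
  | zero => exact absurd (hi.trans hij) (by norm_num)
  | succ m ih =>
    rcases eq_or_lt_of_le hij with h | h
    · exact le_of_eq (congrArg T h)
    · have h1 : T i ≤ T m := ih (by omega) (by omega)
      have h2 : T m < T (m + 1) := hmono m (by omega) (by omega)
      linarith

lemma eqOn_Ioo_aux {f g : ℝ → ℝ} {A B : ℝ} (hAB : A ≤ B)
    (h : ∀ x ∈ Set.Ioo A B, f x = g x)
    (hg : IntervalIntegrable g MeasureTheory.volume A B) :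
    IntervalIntegrable f MeasureTheory.volume A B ∧
      (∫ x in A..B, f x) = ∫ x in A..B, g x := by
  have hsub : {x | ¬(x ∈ Set.uIoc A B → f x = g x)} ⊆ {B} := by
    intro x hx
    simp only [Set.mem_setOf_eq, not_forall] at hx
    obtain ⟨hx1, hx2⟩ := hx
    rw [Set.uIoc_of_le hAB] at hx1
    by_contra hxB
    exact hx2 (h x ⟨hx1.1, lt_of_le_of_ne hx1.2 hxB⟩)
  have hae : ∀ᵐ x ∂MeasureTheory.volume, x ∈ Set.uIoc A B → f x = g x := by
    rw [MeasureTheory.ae_iff]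
    exact MeasureTheory.measure_mono_null hsub (MeasureTheory.measure_singleton B)
  constructor
  · rw [intervalIntegrable_iff_integrableOn_Ioc_of_le hAB]
    rw [intervalIntegrable_iff_integrableOn_Ioc_of_le hAB] at hg
    apply hg.congr_fun_ae
    refine (MeasureTheory.ae_restrict_iff' measurableSet_Ioc).2 ?_
    rw [MeasureTheory.ae_iff]
    refine MeasureTheory.measure_mono_null ?_ (MeasureTheory.measure_singleton B)
    intro x hx
    simp only [Set.mem_setOf_eq, not_forall] at hx
    obtain ⟨hx1, hx2⟩ := hx
    by_contra hxB
    exact hx2 ((h x ⟨hx1.1, lt_of_le_of_ne hx1.2 hxB⟩).symm)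
  · exact intervalIntegral.integral_congr_ae hae

lemma int_one_div_aux (A B : ℝ) (hA : 0 < A) (hAB : A ≤ B) (c : ℝ) :
    IntervalIntegrable (fun s => c * (1 / s)) MeasureTheory.volume A B ∧
      (∫ s in A..B, c * (1 / s)) = c * Real.log (B / A) := by
  have h0 : (0:ℝ) ∉ Set.uIcc A B := by
    rw [Set.uIcc_of_le hAB]; intro h; exact absurd h.1 (by linarith)
  constructor
  · apply IntervalIntegrable.const_mul
    apply ContinuousOn.intervalIntegrable
    apply ContinuousOn.div continuousOn_const continuousOn_id
    intro x hx
    rw [Set.uIcc_of_le hAB] at hx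
    exact ne_of_gt (lt_of_lt_of_le hA hx.1)
  · rw [intervalIntegral.integral_const_mul, integral_one_div h0]

lemma int_one_div_one_sub_aux (A B : ℝ) (hAB : A ≤ B) (hB : B < 1) (c : ℝ) :
    IntervalIntegrable (fun s => c * (1 / (1 - s))) MeasureTheory.volume A B ∧
      (∫ s in A..B, c * (1 / (1 - s))) = c * Real.log ((1 - A) / (1 - B)) := by
  have hne : ∀ x ∈ Set.uIcc A B, 1 - x ≠ 0 := by
    intro x hx
    rw [Set.uIcc_of_le hAB] at hx
    have := hx.2
    intro h; linarith
  constructor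
  · apply IntervalIntegrable.const_mul
    apply ContinuousOn.intervalIntegrable
    exact ContinuousOn.div continuousOn_const (by fun_prop) hne
  · rw [intervalIntegral.integral_const_mul]
    have h1 : (∫ s in A..B, 1 / (1 - s)) = ∫ x in (1-B)..(1-A), 1/x :=
      intervalIntegral.integral_comp_sub_left (fun x => 1/x) 1
    rw [h1, integral_one_div]
    rw [Set.uIcc_of_le (by linarith)]
    intro h
    exact absurd h.1 (by simp; linarith)

lemma piece_aux (A B : ℝ) (K c1 c2 : ℝ) (hAB : A ≤ B)
    (h1 : c1 = 0 ∧ 0 ≤ A ∨ 0 < A) (h2 : c2 = 0 ∧ B ≤ 1 ∨ B < 1) :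
    IntervalIntegrable (fun s => -K + c1 * (1 / s) + c2 * (1 / (1 - s)))
        MeasureTheory.volume A B ∧
      (∫ s in A..B, (-K + c1 * (1 / s) + c2 * (1 / (1 - s))))
        = -K * (B - A) + c1 * Real.log (B / A) + c2 * Real.log ((1 - A) / (1 - B)) := by
  have H1 : IntervalIntegrable (fun s => c1 * (1 / s)) MeasureTheory.volume A B ∧
      (∫ s in A..B, c1 * (1 / s)) = c1 * Real.log (B / A) := by
    rcases h1 with ⟨hc, _⟩ | hA
    · subst hc
      constructor
      · simpa using (intervalIntegrable_const :
          IntervalIntegrable (fun _ : ℝ => (0:ℝ)) MeasureTheory.volume A B)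
      · simp
    · exact int_one_div_aux A B hA hAB c1
  have H2 : IntervalIntegrable (fun s => c2 * (1 / (1 - s))) MeasureTheory.volume A B ∧
      (∫ s in A..B, c2 * (1 / (1 - s))) = c2 * Real.log ((1 - A) / (1 - B)) := by
    rcases h2 with ⟨hc, _⟩ | hB
    · subst hc
      constructor
      · simpa using (intervalIntegrable_const :
          IntervalIntegrable (fun _ : ℝ => (0:ℝ)) MeasureTheory.volume A B)
      · simp
    · exact int_one_div_one_sub_aux A B hAB hB c2
  have Hc : IntervalIntegrable (fun _ : ℝ => -K) MeasureTheory.volume A B :=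
    intervalIntegrable_const
  constructor
  · exact (Hc.add H1.1).add H2.1
  · rw [intervalIntegral.integral_add (Hc.add H1.1) H2.1,
      intervalIntegral.integral_add Hc H1.1, intervalIntegral.integral_const, H1.2, H2.2,
      smul_eq_mul]
    ring

/-- Fix `τ > 0`, an integer `n ≥ 1`, and event times
`0 < T₁ < ⋯ < T_n < τ`, and let `N(t) = #{i ∈ {1,…,n} : T_i ≤ t}`. Then the integral
`∫₀¹ (N(sτ) − sN(τ))²/(s(1−s)) ds` is finite and equals
`Σ_{i=1}^{n−1} [ (n−i)² ln((τ−T_i)/(τ−T_{i+1})) + i² ln(T_{i+1}/T_i) ]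
  + n² [ ln(τ/(τ−T₁)) + ln(τ/T_n) − 1 ]`. -/
theorem integral_anderson_darling_counting_bridge_eq
    (τ : ℝ) (hτ : 0 < τ) (n : ℕ) (hn : 1 ≤ n) (T : ℕ → ℝ)
    (hT1 : 0 < T 1)
    (hmono : ∀ i, 1 ≤ i → i < n → T i < T (i + 1))
    (hTn : T n < τ) :
    IntervalIntegrable
      (fun s => ((countN n T (s * τ) : ℝ) - s * (countN n T τ : ℝ)) ^ 2 / (s * (1 - s)))
      MeasureTheory.volume 0 1 ∧
    (∫ s in (0:ℝ)..1,
        ((countN n T (s * τ) : ℝ) - s * (countN n T τ : ℝ)) ^ 2 / (s * (1 - s)))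
      = (∑ i ∈ Finset.Ico 1 n,
          (((n : ℝ) - i) ^ 2 * Real.log ((τ - T i) / (τ - T (i + 1)))
            + (i : ℝ) ^ 2 * Real.log (T (i + 1) / T i)))
        + (n : ℝ) ^ 2 *
            (Real.log (τ / (τ - T 1)) + Real.log (τ / T n) - 1) := by
  have hτ0 : τ ≠ 0 := ne_of_gt hτ
  have hmonole : ∀ i j, 1 ≤ i → i ≤ j → j ≤ n → T i ≤ T j := T_mono_aux n T hmono
  have hpos : ∀ i, 1 ≤ i → i ≤ n → 0 < T i := fun i h1 h2 =>
    lt_of_lt_of_le hT1 (hmonole 1 i le_rfl h1 h2)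
  have hltτ : ∀ i, 1 ≤ i → i ≤ n → T i < τ := fun i h1 h2 =>
    lt_of_le_of_lt (hmonole i n h1 h2 le_rfl) hTn
  set a : ℕ → ℝ := fun i => if i = 0 then 0 else if i ≤ n then T i / τ else 1 with ha_def
  have ha0 : a 0 = 0 := by simp [ha_def]
  have haT : ∀ i, 1 ≤ i → i ≤ n → a i = T i / τ := by
    intro i h1 h2
    simp only [ha_def]
    rw [if_neg (by omega), if_pos h2]
  have hatop : ∀ i, n < i → a i = 1 := by
    intro i h
    simp only [ha_def]
    rw [if_neg (by omega), if_neg (by omega)]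
  have ha_nonneg : ∀ i, 0 ≤ a i := by
    intro i
    by_cases h0 : i = 0
    · rw [h0, ha0]
    by_cases h1 : i ≤ n
    · rw [haT i (by omega) h1]
      exact le_of_lt (div_pos (hpos i (by omega) h1) hτ)
    · rw [hatop i (by omega)]; norm_num
  have ha_le1 : ∀ i, a i ≤ 1 := by
    intro i
    by_cases h0 : i = 0
    · rw [h0, ha0]; norm_num
    by_cases h1 : i ≤ n
    · rw [haT i (by omega) h1]
      exact le_of_lt ((div_lt_one hτ).2 (hltτ i (by omega) h1))
    · rw [hatop i (by omega)]
  have hastep : ∀ i, i ≤ n → a i < a (i + 1) := by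
    intro i hi
    by_cases h0 : i = 0
    · rw [h0, ha0, haT 1 le_rfl hn]
      exact div_pos hT1 hτ
    by_cases h1 : i < n
    · rw [haT i (by omega) (by omega), haT (i+1) (by omega) (by omega)]
      exact (div_lt_div_iff_of_pos_right hτ).2 (hmono i (by omega) h1)
    · have hin : i = n := by omega
      rw [hin, haT n hn le_rfl, hatop (n+1) (by omega)]
      exact (div_lt_one hτ).2 hTn
  have hNτ : countN n T τ = n :=
    countN_aux n n T τ le_rfl (fun i h1 h2 => le_of_lt (hltτ i h1 h2))
      (fun i h1 h2 => absurd h1 (by omega))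
  have hNs : ∀ i, i ≤ n → ∀ s ∈ Set.Ioo (a i) (a (i + 1)), countN n T (s * τ) = i := by
    intro i hi s hs
    apply countN_aux n i T _ hi
    · intro j h1 h2
      have h1i : 1 ≤ i := le_trans h1 h2
      have hTi : T i < s * τ := by
        have := hs.1
        rw [haT i h1i hi] at this
        exact (div_lt_iff₀ hτ).1 this
      exact le_trans (hmonole j i h1 h2 hi) (le_of_lt hTi)
    · intro j hij hjn
      have hin : i < n := lt_of_lt_of_le hij hjn
      have hs2 : s * τ < T (i + 1) := by
        have := hs.2
        rw [haT (i + 1) (by omega) (by omega)] at this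
        exact (lt_div_iff₀ hτ).1 this
      exact lt_of_lt_of_le hs2 (hmonole (i + 1) j (by omega) (by omega) hjn)
  set F : ℝ → ℝ :=
    fun s => ((countN n T (s * τ) : ℝ) - s * (countN n T τ : ℝ)) ^ 2 / (s * (1 - s))
    with hF_def
  set V : ℕ → ℝ := fun i =>
    -(n : ℝ) ^ 2 * (a (i + 1) - a i) + (i : ℝ) ^ 2 * Real.log (a (i + 1) / a i)
      + ((n : ℝ) - (i : ℝ)) ^ 2 * Real.log ((1 - a i) / (1 - a (i + 1))) with hV_def
  have key : ∀ i, i ≤ n → IntervalIntegrable F MeasureTheory.volume (a i) (a (i + 1)) ∧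
      (∫ s in a i..a (i + 1), F s) = V i := by
    intro i hi
    have hAB := (hastep i hi).le
    have h1 : (i : ℝ) ^ 2 = 0 ∧ 0 ≤ a i ∨ 0 < a i := by
      by_cases h0 : i = 0
      · exact Or.inl ⟨by simp [h0], ha_nonneg i⟩
      · exact Or.inr (by rw [haT i (by omega) hi]; exact div_pos (hpos i (by omega) hi) hτ)
    have h2 : ((n : ℝ) - (i : ℝ)) ^ 2 = 0 ∧ a (i + 1) ≤ 1 ∨ a (i + 1) < 1 := by
      by_cases h0 : i = n
      · exact Or.inl ⟨by simp [h0], ha_le1 (i + 1)⟩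
      · refine Or.inr ?_
        rw [haT (i + 1) (by omega) (by omega)]
        exact (div_lt_one hτ).2 (hltτ (i + 1) (by omega) (by omega))
    have hpiece := piece_aux (a i) (a (i + 1)) ((n : ℝ) ^ 2) ((i : ℝ) ^ 2)
      (((n : ℝ) - (i : ℝ)) ^ 2) hAB h1 h2
    have heq : ∀ s ∈ Set.Ioo (a i) (a (i + 1)),
        F s = -(n : ℝ) ^ 2 + (i : ℝ) ^ 2 * (1 / s)
          + ((n : ℝ) - (i : ℝ)) ^ 2 * (1 / (1 - s)) := by
      intro s hs
      have hs0 : 0 < s := lt_of_le_of_lt (ha_nonneg i) hs.1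
      have hs1 : s < 1 := lt_of_lt_of_le hs.2 (ha_le1 (i + 1))
      have hs1' : 1 - s ≠ 0 := by linarith
      simp only [hF_def, hNs i hi s hs, hNτ]
      field_simp
      ring
    obtain ⟨hFi, hFeq⟩ := eqOn_Ioo_aux hAB heq hpiece.1
    exact ⟨hFi, by rw [hFeq, hpiece.2]⟩
  constructor
  · have h := IntervalIntegrable.trans_iterate (a := a) (n := n + 1)
      (μ := MeasureTheory.volume) (f := F) (fun k hk => (key k (by omega)).1)
    rwa [ha0, hatop (n + 1) (by omega)] at h
  · have h := intervalIntegral.sum_integral_adjacent_intervals (a := a) (n := n + 1)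
      (μ := MeasureTheory.volume) (f := F) (fun k hk => (key k (by omega)).1)
    rw [ha0, hatop (n + 1) (by omega)] at h
    have hsum : (∫ s in (0:ℝ)..1, F s) = ∑ i ∈ Finset.range (n + 1), V i := by
      rw [← h]
      refine Finset.sum_congr rfl fun i hi => ?_
      exact (key i (Nat.lt_succ_iff.1 (Finset.mem_range.1 hi))).2
    rw [hsum]
    have htel : ∑ i ∈ Finset.range (n + 1), (a (i + 1) - a i) = 1 := by
      rw [Finset.sum_range_sub (f := a), ha0, hatop (n + 1) (by omega)]
      ring
    set W : ℕ → ℝ := fun i => (i : ℝ) ^ 2 * Real.log (a (i + 1) / a i)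
      + ((n : ℝ) - (i : ℝ)) ^ 2 * Real.log ((1 - a i) / (1 - a (i + 1))) with hW_def
    have hsplit : ∑ i ∈ Finset.range (n + 1), V i
        = -(n : ℝ) ^ 2 + ∑ i ∈ Finset.range (n + 1), W i := by
      have hVW : ∀ i, V i = -(n : ℝ) ^ 2 * (a (i + 1) - a i) + W i := by
        intro i; simp only [hV_def, hW_def]; ring
      rw [Finset.sum_congr rfl fun i _ => hVW i, Finset.sum_add_distrib, ← Finset.mul_sum, htel]
      ring
    have hW0 : W 0 = (n : ℝ) ^ 2 * Real.log (τ / (τ - T 1)) := by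
      have harg : (1 - a 0) / (1 - a 1) = τ / (τ - T 1) := by
        rw [ha0, haT 1 le_rfl hn]
        have hτT : τ - T 1 ≠ 0 := by have := hltτ 1 le_rfl hn; intro h; linarith
        field_simp
        norm_num
      simp only [hW_def, harg]
      simp
    have hWn : W n = (n : ℝ) ^ 2 * Real.log (τ / T n) := by
      have harg : a (n + 1) / a n = τ / T n := by
        rw [hatop (n + 1) (by omega), haT n hn le_rfl, one_div_div]
      simp only [hW_def, harg]
      simp
    have hWmid : ∀ i ∈ Finset.Ico 1 n, W i
        = ((n : ℝ) - i) ^ 2 * Real.log ((τ - T i) / (τ - T (i + 1)))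
          + (i : ℝ) ^ 2 * Real.log (T (i + 1) / T i) := by
      intro i hi
      rw [Finset.mem_Ico] at hi
      have hTi : T i ≠ 0 := ne_of_gt (hpos i hi.1 (le_of_lt hi.2))
      have hTi1 : τ - T (i + 1) ≠ 0 := by
        have := hltτ (i + 1) (by omega) (by omega); intro h; linarith
      have harg1 : a (i + 1) / a i = T (i + 1) / T i := by
        rw [haT i hi.1 (le_of_lt hi.2), haT (i + 1) (by omega) (by omega)]
        field_simp
      have harg2 : (1 - a i) / (1 - a (i + 1)) = (τ - T i) / (τ - T (i + 1)) := by
        rw [haT i hi.1 (le_of_lt hi.2), haT (i + 1) (by omega) (by omega)]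
        rw [show (1 : ℝ) - T i / τ = (τ - T i) / τ by field_simp,
            show (1 : ℝ) - T (i + 1) / τ = (τ - T (i + 1)) / τ by field_simp]
        field_simp
      simp only [hW_def, harg1, harg2]
      ring
    have hWsum : ∑ i ∈ Finset.range (n + 1), W i
        = W 0 + (∑ i ∈ Finset.Ico 1 n, W i) + W n := by
      rw [Finset.sum_range_succ, Finset.range_eq_Ico,
        Finset.sum_eq_sum_Ico_succ_bot (by omega : 0 < n)]
    rw [hsplit, hWsum, hW0, hWn, Finset.sum_congr rfl hWmid]
    ring
end
end

section
/- Fix τ > 0, a ∈ [0,1], an integer n ≥ 1, and event times 0 < T₁ < ⋯ < T_n < τ, and let N(t) = #{i ∈ {1,…,n} : T_i ≤ t}. Then τ [ ∫₀^a (N(sτ) − sN(τ)) ds − ∫_a^1 (N(sτ) − sN(τ)) ds ] = Σ_{i=1}^n |T_i − aτ| − (1/2 − a(1−a)) τ n. -/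
open Filter Set

noncomputable section

lemma step_mono (u : ℝ) : Monotone (fun s : ℝ => if u ≤ s then (1:ℝ) else 0) := by
  intro x y hxy
  dsimp only
  split_ifs with h1 h2
  · exact le_rfl
  · exact absurd (h1.trans hxy) h2
  · norm_num
  · exact le_rfl

lemma step_integrable (u b c : ℝ) :
    IntervalIntegrable (fun s : ℝ => if u ≤ s then (1:ℝ) else 0) MeasureTheory.volume b c :=
  (step_mono u).intervalIntegrable

lemma step_integral_zero (u b c : ℝ) (hbc : b ≤ c) (hcu : c ≤ u) :
    ∫ s in b..c, (if u ≤ s then (1:ℝ) else 0) = 0 := by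
  rw [intervalIntegral.integral_congr_ae (g := fun _ => (0:ℝ))]
  · simp
  · have hne : ∀ᵐ s : ℝ, s ≠ u := by
      rw [MeasureTheory.ae_iff]
      simpa using MeasureTheory.measure_singleton (μ := MeasureTheory.volume) u
    filter_upwards [hne] with s hs hmem
    rw [Set.uIoc_of_le hbc] at hmem
    have : s < u := lt_of_le_of_ne (hmem.2.trans hcu) hs
    simp [not_le.mpr this]

lemma step_integral_one (u b c : ℝ) (hbc : b ≤ c) (hub : u ≤ b) :
    ∫ s in b..c, (if u ≤ s then (1:ℝ) else 0) = c - b := by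
  rw [intervalIntegral.integral_congr (g := fun _ => (1:ℝ)), intervalIntegral.integral_const]
  · simp
  · intro s hs
    rw [Set.uIcc_of_le hbc] at hs
    simp [hub.trans hs.1]

lemma step_integral (u b c : ℝ) (hbc : b ≤ c) :
    ∫ s in b..c, (if u ≤ s then (1:ℝ) else 0) = max c u - max b u := by
  rcases le_total u b with h | h
  · rw [step_integral_one u b c hbc h, max_eq_left (h.trans hbc), max_eq_left h]
  · rcases le_total c u with h' | h'
    · rw [step_integral_zero u b c hbc h', max_eq_right h', max_eq_right h]
      ring
    · rw [← intervalIntegral.integral_add_adjacent_intervals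
        (b := u) (step_integrable u b u) (step_integrable u u c),
        step_integral_zero u b u h le_rfl, step_integral_one u u c h' le_rfl,
        max_eq_left h', max_eq_right h]
      ring

lemma countN_eq_sum (n : ℕ) (T : ℕ → ℝ) (t : ℝ) :
    (countN n T t : ℝ) = ∑ i ∈ Finset.Icc 1 n, (if T i ≤ t then (1:ℝ) else 0) := by
  have hset : {i : ℕ | 1 ≤ i ∧ i ≤ n ∧ T i ≤ t}
      = ↑((Finset.Icc 1 n).filter fun i => T i ≤ t) := by
    ext i
    simp [Finset.mem_Icc, and_assoc]
  rw [countN, hset, Set.ncard_coe_finset, Finset.sum_boole]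

theorem integral_counting_bridge_extended_LR_eq
    (τ : ℝ) (hτ : 0 < τ) (a : ℝ) (ha : a ∈ Set.Icc (0:ℝ) 1)
    (n : ℕ) (hn : 1 ≤ n) (T : ℕ → ℝ)
    (hT1 : 0 < T 1)
    (hmono : ∀ i, 1 ≤ i → i < n → T i < T (i + 1))
    (hTn : T n < τ) :
    τ * ((∫ s in (0:ℝ)..a, ((countN n T (s * τ) : ℝ) - s * (countN n T τ : ℝ)))
          - ∫ s in a..1, ((countN n T (s * τ) : ℝ) - s * (countN n T τ : ℝ)))
      = (∑ i ∈ Finset.Icc 1 n, |T i - a * τ|)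
        - (1 / 2 - a * (1 - a)) * τ * n := by
  obtain ⟨ha0, ha1⟩ := ha
  -- chain monotonicity
  have hchain : ∀ i j, 1 ≤ i → i ≤ j → j ≤ n → T i ≤ T j := by
    intro i j h1 hij hjn
    induction j with
    | zero => omega
    | succ k ih =>
      rcases Nat.lt_or_ge i (k + 1) with h | h
      · have h1k : 1 ≤ k := by omega
        exact (ih (by omega) (by omega)).trans (hmono k h1k (by omega)).le
      · have : i = k + 1 := by omega
        subst this; exact le_rfl
  have hTpos : ∀ i, 1 ≤ i → i ≤ n → 0 < T i :=
    fun i h1 h2 => hT1.trans_le (hchain 1 i le_rfl h1 h2)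
  have hTlt : ∀ i, 1 ≤ i → i ≤ n → T i < τ :=
    fun i h1 h2 => (hchain i n h1 h2 le_rfl).trans_lt hTn
  have hNτ : (countN n T τ : ℝ) = n := by
    rw [countN_eq_sum]
    have h1 : ∀ i ∈ Finset.Icc 1 n, (if T i ≤ τ then (1:ℝ) else 0) = 1 := by
      intro i hi
      rw [Finset.mem_Icc] at hi
      exact if_pos (hTlt i hi.1 hi.2).le
    rw [Finset.sum_congr rfl h1, Finset.sum_const, Nat.card_Icc]
    simp
  have hrw : ∀ s : ℝ, (countN n T (s * τ) : ℝ) - s * (countN n T τ : ℝ)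
      = ∑ i ∈ Finset.Icc 1 n, ((if T i / τ ≤ s then (1:ℝ) else 0) - s) := by
    intro s
    rw [countN_eq_sum, hNτ]
    have h1 : ∀ i ∈ Finset.Icc 1 n, (if T i ≤ s * τ then (1:ℝ) else 0)
        = (if T i / τ ≤ s then (1:ℝ) else 0) := by
      intro i _
      congr 1
      simp [div_le_iff₀ hτ]
    rw [Finset.sum_congr rfl h1, Finset.sum_sub_distrib, Finset.sum_const]
    congr 1
    simp [Nat.card_Icc, mul_comm]
  have hid : ∀ b c : ℝ, IntervalIntegrable (fun x : ℝ => x) MeasureTheory.volume b c :=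
    fun b c => continuous_id.intervalIntegrable b c
  have hintg : ∀ (i : ℕ) (b c : ℝ), IntervalIntegrable
      (fun s => (if T i / τ ≤ s then (1:ℝ) else 0) - s) MeasureTheory.volume b c :=
    fun i b c => (step_integrable _ b c).sub (hid b c)
  have hI : ∀ (b c : ℝ), b ≤ c →
      (∫ s in b..c, ((countN n T (s * τ) : ℝ) - s * (countN n T τ : ℝ)))
        = ∑ i ∈ Finset.Icc 1 n, ((max c (T i / τ) - max b (T i / τ)) - (c ^ 2 - b ^ 2) / 2) := by
    intro b c hbc
    simp only [hrw]
    rw [intervalIntegral.integral_finset_sum (fun i _ => hintg i b c)]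
    refine Finset.sum_congr rfl fun i _ => ?_
    rw [intervalIntegral.integral_sub (step_integrable _ b c) (hid b c),
      step_integral _ b c hbc, integral_id]
  rw [hI 0 a ha0, hI a 1 ha1, ← Finset.sum_sub_distrib, Finset.mul_sum]
  have key : ∀ i ∈ Finset.Icc 1 n,
      τ * (((max a (T i / τ) - max 0 (T i / τ)) - (a ^ 2 - 0 ^ 2) / 2)
          - ((max 1 (T i / τ) - max a (T i / τ)) - (1 ^ 2 - a ^ 2) / 2))
        = |T i - a * τ| - (1 / 2 - a * (1 - a)) * τ := by
    intro i hi
    rw [Finset.mem_Icc] at hi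
    have hu0 : 0 ≤ T i / τ := (div_pos (hTpos i hi.1 hi.2) hτ).le
    have hu1 : T i / τ ≤ 1 := by
      rw [div_le_one hτ]
      exact (hTlt i hi.1 hi.2).le
    rw [max_eq_right hu0, max_eq_left hu1]
    have hmax : τ * max a (T i / τ) = max (a * τ) (T i) := by
      rw [mul_max_of_nonneg _ _ hτ.le, mul_comm τ a, mul_div_cancel₀ _ hτ.ne']
    have habs : |T i - a * τ| = 2 * max (a * τ) (T i) - a * τ - T i := by
      rcases le_total (T i) (a * τ) with h | h
      · rw [abs_of_nonpos (by linarith), max_eq_left h]; ring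
      · rw [abs_of_nonneg (by linarith), max_eq_right h]; ring
    have hdiv : τ * (T i / τ) = T i := mul_div_cancel₀ _ hτ.ne'
    rw [habs]
    linear_combination 2 * hmax - hdiv
  rw [Finset.sum_congr rfl key, Finset.sum_sub_distrib, Finset.sum_const, Nat.card_Icc]
  push_cast
  ring
end
end
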